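/- Let f be an entire or meromorphic function, and suppose every connected component of f⁻¹(B_ε(b)) is unbounded for all ε > 0, and f is not injective on any such component. If V is a bounded domain with f(V₋₁) = V for some component V₋₁ of f⁻¹(V) on which f is injective, then b ∉ V. -/
import Mathlib

/-- Suppose every connected component of `f ⁻¹ (B_ε b)` is unbounded for
every `ε > 0` and `f` is not injective on any such component.  If `V` is a bounded
domain and `Vpre` is a component of `f ⁻¹ V` with `f '' Vpre = V` and `f` injective on
`Vpre`, then `b ∉ V`. -/
theorem statement10 (f : ℂ → ℂ) (b : ℂ)
    (hpre : ∀ ε > (0 : ℝ), ∀ z ∈ f ⁻¹' Metric.ball b ε,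
      ¬ Bornology.IsBounded (connectedComponentIn (f ⁻¹' Metric.ball b ε) z) ∧
      ¬ Set.InjOn f (connectedComponentIn (f ⁻¹' Metric.ball b ε) z))
    (V Vpre : Set ℂ)
    (hVopen : IsOpen V) (hVconn : IsConnected V) (hVbdd : Bornology.IsBounded V)
    (z₁ : ℂ) (hz₁ : z₁ ∈ f ⁻¹' V)
    (hV₁ : Vpre = connectedComponentIn (f ⁻¹' V) z₁)
    (him : f '' Vpre = V) (hinj : Set.InjOn f Vpre) :
    b ∉ V := by
  intro hbV
  obtain ⟨z, hzV, hfz⟩ : ∃ z ∈ Vpre, f z = b := by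
    rw [← him] at hbV; exact hbV
  obtain ⟨ε, hε, hball⟩ := Metric.isOpen_iff.1 hVopen b hbV
  have hzmem : z ∈ f ⁻¹' Metric.ball b ε := by
    simp [Set.mem_preimage, hfz, Metric.mem_ball, hε]
  have hsub : connectedComponentIn (f ⁻¹' Metric.ball b ε) z ⊆ Vpre := by
    have h1 : connectedComponentIn (f ⁻¹' Metric.ball b ε) z ⊆
        connectedComponentIn (f ⁻¹' V) z :=
      connectedComponentIn_mono _ (Set.preimage_mono hball)
    have h2 : connectedComponentIn (f ⁻¹' V) z = Vpre := by
      have hz' : z ∈ connectedComponentIn (f ⁻¹' V) z₁ := hV₁ ▸ hzV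
      rw [hV₁]
      exact (connectedComponentIn_eq hz').symm
    exact h2 ▸ h1
  exact (hpre ε hε z hzmem).2 (hinj.mono hsub)
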